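/- With P' constructed as above from T ⪯ P in type B or C, the diagrams D(P,T) and D(P',T) have the same cuts: C_{P,T} = C_{P',T}. -/
import Mathlib


open scoped Classical

/-- `p : ℕ → ℕ` encodes a Schubert symbol `{p 1 < … < p m} ⊆ [1,N]`
with the conventions `p 0 = 0` and `p (m+1) = N+1`, and the isotropic
condition that no two elements sum to `N+1`. -/
structure IsSSym (N m : ℕ) (p : ℕ → ℕ) : Prop where
  zero : p 0 = 0
  top : p (m+1) = N+1
  mono : ∀ i j, i < j → j ≤ m+1 → p i < p j
  ub : ∀ i, 1 ≤ i → i ≤ m → p i ≤ N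
  iso : ∀ i j, 1 ≤ i → i ≤ m → 1 ≤ j → j ≤ m → p i + p j ≠ N+1

/-- The underlying set `{p 1, …, p m}` of a Schubert symbol. -/
def symSet (m : ℕ) (p : ℕ → ℕ) : Finset ℕ := (Finset.Icc 1 m).image p

/-- Componentwise order `t_i ≤ p_i` on Schubert symbols. -/
def leS (m : ℕ) (t p : ℕ → ℕ) : Prop := ∀ i, 1 ≤ i → i ≤ m → t i ≤ p i

/-- `c` is a visible cut of the Richardson diagram `D(P,T)`:
`p_i ≤ c < t_{i+1}` for some `0 ≤ i ≤ m`. -/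
def visCut (m : ℕ) (p t : ℕ → ℕ) (c : ℕ) : Prop :=
  ∃ i, i ≤ m ∧ p i ≤ c ∧ c < t (i+1)

/-- `c` is an apparent cut of `D(P,T)`: `c` or `N−c` is a visible cut. -/
def appCut (N m : ℕ) (p t : ℕ → ℕ) (c : ℕ) : Prop :=
  visCut m p t c ∨ visCut m p t (N - c)

/-- `c` is a zero column of `D(P,T)`: `p_j < c < t_{j+1}` for some `j`. -/
def zeroCol (m : ℕ) (p t : ℕ → ℕ) (c : ℕ) : Prop :=
  ∃ j, j ≤ m ∧ p j < c ∧ c < t (j+1)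

/-- `(j,c)` is a lone star of `D(P,T)` with respect to the cut predicate `cut`. -/
def loneStar (m : ℕ) (p t : ℕ → ℕ) (cut : ℕ → Prop) (j c : ℕ) : Prop :=
  1 ≤ j ∧ j ≤ m ∧ t j ≤ c ∧ c ≤ p j ∧
    ((c = t j ∧ cut c) ∨ (c = p j ∧ cut (c-1)))

/-- `c ∈ 𝓛_{P,T}` : `c` is a zero column, or column `N+1−c` contains a lone star. -/
def LSet (N m : ℕ) (p t : ℕ → ℕ) (cut : ℕ → Prop) (c : ℕ) : Prop :=
  1 ≤ c ∧ c ≤ N ∧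
    (zeroCol m p t c ∨ ∃ j, loneStar m p t cut j (N+1-c))

/-- `[P] = P ∪ {N+1−p : p ∈ P}`. -/
def brP (N : ℕ) (P : Finset ℕ) : Finset ℕ := P ∪ P.image (fun p => N+1-p)

/-- The type-`D` type function `t(P) ∈ {0,1,2}`: if `n+1 ∈ [P]` it is the parity of
`#([1,n+1] \ P)`; otherwise it is `2`. -/
def tD (n : ℕ) (P : Finset ℕ) : ℕ :=
  if (n+1) ∈ P ∨ (n+2) ∈ P then (Finset.Icc 1 (n+1) \ P).card % 2 else 2

/-- The type-`D` Bruhat order `T ⪯ P` on Schubert symbols for `OG(m, 2n+2)`. -/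
def bruhatD (n m : ℕ) (t p : ℕ → ℕ) : Prop :=
  leS m t p ∧ ∀ c, 1 ≤ c → c ≤ n →
    Finset.Icc (c+1) (n+1) ⊆ brP (2*n+2) (symSet m p) →
    Finset.Icc (c+1) (n+1) ⊆ brP (2*n+2) (symSet m t) →
    ((symSet m p) ∩ Finset.Icc 1 c).card = ((symSet m t) ∩ Finset.Icc 1 c).card →
    tD n (symSet m p) = tD n (symSet m t)

/-- The exceptional center cut `n+1` exists in `D(P,T)`:
`p_i = n+2 ≤ t_{i+1}` or `t_i = n+1 ≥ p_{i−1}` for some `i`. -/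
def centerCut (n m : ℕ) (p t : ℕ → ℕ) : Prop :=
  ∃ i, 1 ≤ i ∧ i ≤ m ∧
    ((p i = n+2 ∧ n+2 ≤ t (i+1)) ∨ (t i = n+1 ∧ p (i-1) ≤ n+1))

/-- `c ∈ [1,n]` is a cut candidate of `D(P,T)`:
`[c+1,n+1] ⊆ [P] ∩ [T]` and `#(T ∩ [1,c]) = #(P ∩ [1,c]) + 1`. -/
def cutCandidate (n m : ℕ) (p t : ℕ → ℕ) (c : ℕ) : Prop :=
  1 ≤ c ∧ c ≤ n ∧
  Finset.Icc (c+1) (n+1) ⊆ brP (2*n+2) (symSet m p) ∧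
  Finset.Icc (c+1) (n+1) ⊆ brP (2*n+2) (symSet m t) ∧
  ((symSet m t) ∩ Finset.Icc 1 c).card = ((symSet m p) ∩ Finset.Icc 1 c).card + 1

/-- Exceptional cuts of `D(P,T)` in type `D`. -/
def excCut (n m : ℕ) (p t : ℕ → ℕ) (c : ℕ) : Prop :=
  (centerCut n m p t ∧ c = n+1) ∨
  (tD n (symSet m t) ≠ tD n (symSet m p) ∧
    ∃ d, cutCandidate n m p t d ∧ (c = d ∨ c = 2*n+2 - d))

/-- The type-`D` cut set: apparent cuts together with exceptional cuts. -/
def cutD (n m : ℕ) (p t : ℕ → ℕ) (c : ℕ) : Prop :=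
  appCut (2*n+2) m p t c ∨ excCut n m p t c

/-- The construction of the Schubert symbol `P'` from `T ⪯ P` in types `B` and `C`. -/
noncomputable def Pp (N m : ℕ) (p t : ℕ → ℕ) (i : ℕ) : ℕ :=
  if p i < t (i+1) then p i
  else if ¬ appCut N m p t (t (i+1) - 1) then t (i+1)
  else ((Finset.Icc (t i) (t (i+1) - 1)).filter
        (fun c => ¬ LSet N m p t (appCut N m p t) c)).sup id

/-- The modified construction of the Schubert symbol `P̃` from `T ⪯ P` in type `D`. -/
noncomputable def Ptil (n m : ℕ) (p t : ℕ → ℕ) (i : ℕ) : ℕ :=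
  if p i < t (i+1) then p i
  else if ¬ cutD n m p t (t (i+1) - 1) then
    (if t (i+1) = n+1 ∨ t (i+1) = n+2 then 2*n+3 - t (i+1) else t (i+1))
  else ((Finset.Icc (t i) (t (i+1) - 1)).filter
        (fun c => ¬ LSet (2*n+2) m p t (cutD n m p t) c)).sup id

/-- A critical window `[c+1, N−c]` in `D(P,T)` (type `D`, defined when `t(T) ≠ t(P)`):
`c` and `N−c` are visible cuts and `[c+1,n+1] ⊆ [T] ∩ [P]`. -/
def critWindow (n m : ℕ) (p t : ℕ → ℕ) (c : ℕ) : Prop :=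
  c ≤ n ∧ tD n (symSet m t) ≠ tD n (symSet m p) ∧
  visCut m p t c ∧ visCut m p t (2*n+2 - c) ∧
  Finset.Icc (c+1) (n+1) ⊆ brP (2*n+2) (symSet m t) ∧
  Finset.Icc (c+1) (n+1) ⊆ brP (2*n+2) (symSet m p)

/-- The quadratic form `f_c = x_1 x_N + … + x_c x_{N+1−c}`. -/
noncomputable def fquad (N : ℕ) (c : ℕ) (x : ℕ → ℂ) : ℂ := ∑ i ∈ Finset.Icc 1 c, x i * x (N+1-i)

/-- The variety `Z_{P,T}` (affine cone) cut out by quadratic equations `f_c = 0`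
for `c` in a prescribed set `Q` and linear equations `x_c = 0` for `c ∈ 𝓛_{P,T}`. -/
def Zvar (N m : ℕ) (p t : ℕ → ℕ) (Q : ℕ → Prop) (cut : ℕ → Prop) : Set (ℕ → ℂ) :=
  {x | (∀ c, Q c → fquad N c x = 0) ∧ ∀ c, LSet N m p t cut c → x c = 0}


section Aux

variable {N m : ℕ} {p t : ℕ → ℕ}

lemma mono_le (hp : IsSSym N m p) {i j : ℕ} (hij : i ≤ j) (hj : j ≤ m+1) : p i ≤ p j := by
  rcases eq_or_lt_of_le hij with h | h
  · exact h ▸ le_rfl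
  · exact (hp.mono i j h hj).le

lemma lt_of_plt (hp : IsSSym N m p) {i j : ℕ} (h : p i < p j) (hi : i ≤ m+1) : i < j := by
  by_contra hc
  push_neg at hc
  exact absurd (mono_le hp hc hi) (by omega)

lemma visCut_zero (hp : IsSSym N m p) (ht : IsSSym N m t) : visCut m p t 0 := by
  have h1 := ht.mono 0 1 one_pos (by omega)
  have h2 := ht.zero
  exact ⟨0, Nat.zero_le m, by rw [hp.zero], by simp only [zero_add]; omega⟩

lemma L_step (hp : IsSSym N m p) (ht : IsSSym N m t) (hle : leS m t p)
    {c : ℕ} (h : LSet N m p t (appCut N m p t) c) : appCut N m p t (c-1) := by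
  obtain ⟨hc1, hcN, h3⟩ := h
  rcases h3 with ⟨j, hj, hpj, hjt⟩ | ⟨j, hj1, hjm, htj, hpj, hor⟩
  · exact Or.inl ⟨j, hj, by omega, by omega⟩
  · set d := N + 1 - c with hd
    have hd1 : 1 ≤ d := by omega
    have hdN : d ≤ N := by omega
    have hc1d : c - 1 = N - d := by omega
    have hNc : N - (c-1) = d := by omega
    rcases hor with ⟨he, hcut⟩ | ⟨he, hcut⟩
    · have hcut' : visCut m p t d ∨ visCut m p t (N - d) := hcut
      rcases hcut' with hv | hv
      · refine Or.inr ?_; rw [hNc]; exact hv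
      · refine Or.inl ?_; rw [hc1d]; exact hv
    · have hcut' : visCut m p t (d-1) ∨ visCut m p t (N - (d-1)) := hcut
      rcases hcut' with hv | hv
      · obtain ⟨k, hk, hpk, hkt⟩ := hv
        have hkj : k < j := lt_of_plt hp (by omega) (by omega)
        have htk : t (k+1) ≤ t j := mono_le ht (by omega) (by omega)
        have hlej := hle j hj1 hjm
        have htjd : t j = d := by omega
        have htj1 := ht.mono j (j+1) (by omega) (by omega)
        have hvd : visCut m p t d := ⟨j, hjm, by omega, by omega⟩
        refine Or.inr ?_; rw [hNc]; exact hvd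
      · have hrw : N - (d-1) = N + 1 - d := by omega
        rw [hrw] at hv
        obtain ⟨k, hk, hpk, hkt⟩ := hv
        have hpk' : p k ≤ N - d := by
          rcases Nat.eq_zero_or_pos k with rfl | hk1
          · rw [hp.zero]; omega
          · have := hp.iso k j hk1 hk hj1 hjm
            omega
        exact Or.inl ⟨k, hk, by omega, by omega⟩

lemma ti_not_L (hp : IsSSym N m p) (ht : IsSSym N m t) (hle : leS m t p)
    {i : ℕ} (hi1 : 1 ≤ i) (him : i ≤ m) (h1 : t (i+1) ≤ p i) :
    ¬ LSet N m p t (appCut N m p t) (t i) := by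
  rintro ⟨hc1, hcN, h3⟩
  have htii := ht.mono i (i+1) (by omega) (by omega)
  rcases h3 with ⟨j, hj, hpj, hjt⟩ | ⟨j, hj1, hjm, htj, hpj, hor⟩
  · have hij : i < j + 1 := lt_of_plt ht hjt (by omega)
    have : p i ≤ p j := mono_le hp (by omega) (by omega)
    omega
  · set e := N + 1 - t i with hedef
    rcases hor with ⟨he, _⟩ | ⟨he, hcut⟩
    · exact ht.iso j i hj1 hjm hi1 him (by omega)
    · have hcut' : visCut m p t (e-1) ∨ visCut m p t (N - (e-1)) := hcut
      have h1' : N - (e - 1) = t i := by omega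
      rcases hcut' with ⟨k, hk, hpk, hkt⟩ | ⟨k, hk, hpk, hkt⟩
      · have hkj : k < j := lt_of_plt hp (by omega) (by omega)
        have htk : t (k+1) ≤ t j := mono_le ht (by omega) (by omega)
        have hlej := hle j hj1 hjm
        exact ht.iso j i hj1 hjm hi1 him (by omega)
      · have hik : i < k + 1 := lt_of_plt ht (show t i < t (k+1) by omega) (by omega)
        have : p i ≤ p k := mono_le hp (by omega) (by omega)
        omega

lemma Pp_le (i : ℕ) : Pp N m p t i ≤ p i := by
  unfold Pp
  split_ifs with h1 h2
  · exact le_rfl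
  all_goals first
    | omega
    | · refine Finset.sup_le fun b hb => ?_
        have hb2 := (Finset.mem_Icc.1 (Finset.mem_filter.1 hb).1).2
        simp only [id]
        omega

lemma visCut_Pp_mono {c : ℕ} (h : visCut m p t c) : visCut m (Pp N m p t) t c := by
  obtain ⟨i, him, hpc, hct⟩ := h
  exact ⟨i, him, le_trans (Pp_le i) hpc, hct⟩

lemma visCut_Pp (hp : IsSSym N m p) (ht : IsSSym N m t) (hle : leS m t p)
    {c : ℕ} (h : visCut m (Pp N m p t) t c) : appCut N m p t c := by
  obtain ⟨i, him, hpc, hct⟩ := h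
  by_cases h1 : p i < t (i+1)
  · have hP : Pp N m p t i = p i := by unfold Pp; rw [if_pos h1]
    exact Or.inl ⟨i, him, by omega, hct⟩
  · by_cases h2 : appCut N m p t (t (i+1) - 1)
    · have hP : Pp N m p t i = ((Finset.Icc (t i) (t (i+1) - 1)).filter
          (fun c => ¬ LSet N m p t (appCut N m p t) c)).sup id := by
        unfold Pp; rw [if_neg h1, if_neg (not_not_intro h2)]
      have hi1 : 1 ≤ i := by
        rcases Nat.eq_zero_or_pos i with rfl | h; swap; · exact h
        have := ht.mono 0 1 one_pos (by omega)
        have := ht.zero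
        have := hp.zero
        omega
      have htii := ht.mono i (i+1) (by omega) (by omega)
      have htiS : t i ∈ (Finset.Icc (t i) (t (i+1) - 1)).filter
          (fun c => ¬ LSet N m p t (appCut N m p t) c) :=
        Finset.mem_filter.2 ⟨Finset.mem_Icc.2 ⟨le_rfl, by omega⟩,
          ti_not_L hp ht hle hi1 him (by omega)⟩
      have hge : t i ≤ ((Finset.Icc (t i) (t (i+1) - 1)).filter
          (fun c => ¬ LSet N m p t (appCut N m p t) c)).sup id :=
        Finset.le_sup (f := id) htiS
      rw [hP] at hpc
      by_cases hc : c = t (i+1) - 1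
      · rw [hc]; exact h2
      · have hLc : LSet N m p t (appCut N m p t) (c+1) := by
          by_contra hL
          have hmem : c + 1 ∈ (Finset.Icc (t i) (t (i+1) - 1)).filter
              (fun c => ¬ LSet N m p t (appCut N m p t) c) :=
            Finset.mem_filter.2 ⟨Finset.mem_Icc.2 ⟨by omega, by omega⟩, hL⟩
          have := Finset.le_sup (f := id) hmem
          simp only [id] at this
          omega
        have := L_step hp ht hle hLc
        rwa [Nat.add_sub_cancel] at this
    · have hP : Pp N m p t i = t (i+1) := by unfold Pp; rw [if_neg h1, if_pos h2]
      omega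

end Aux

/-- (types B/C) The diagrams `D(P,T)` and `D(P',T)` have the same cuts:
`𝓒_{P,T} = 𝓒_{P',T}`. -/
theorem stmt_11 (N m : ℕ) (p t : ℕ → ℕ)
    (hp : IsSSym N m p) (ht : IsSSym N m t) (hle : leS m t p) :
    ∀ c, appCut N m p t c ↔ appCut N m (Pp N m p t) t c := by
  intro c
  constructor
  · intro h
    have h' : visCut m p t c ∨ visCut m p t (N - c) := h
    rcases h' with h' | h'
    · exact Or.inl (visCut_Pp_mono h')
    · exact Or.inr (visCut_Pp_mono h')
  · intro h
    have h' : visCut m (Pp N m p t) t c ∨ visCut m (Pp N m p t) t (N - c) := h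
    rcases h' with h' | h'
    · exact visCut_Pp hp ht hle h'
    · have h2 : visCut m p t (N - c) ∨ visCut m p t (N - (N - c)) :=
        visCut_Pp hp ht hle h'
      rcases le_or_gt c N with hcN | hcN
      · rcases h2 with hv | hv
        · exact Or.inr hv
        · exact Or.inl (by rwa [Nat.sub_sub_self hcN] at hv)
      · refine Or.inr ?_
        rw [Nat.sub_eq_zero_of_le hcN.le]
        exact visCut_zero hp ht
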